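/- Let H be a graph and r ≥ 2 such that Hom_p(K_r, H) is nonempty. There is a graph homomorphism from the compatibility graph C_{Hom_p(K_r,H)} (for the free cyclic shift Z_r-action) to H; consequently χ(C_{Hom_p(K_r,H)}) ≤ χ(H). -/

import Mathlib

variable {V : Type*}

/-- The Hom poset `Hom_p(K_r, H)`: `r`-tuples of nonempty subsets of `V(H)` that are
pairwise completely joined in `H`, ordered componentwise by inclusion. -/
def HomK (r : ℕ) (H : SimpleGraph V) : Type _ :=
  {A : Fin r → Finset V // (∀ i, (A i).Nonempty) ∧
    ∀ i j : Fin r, i ≠ j → ∀ a ∈ A i, ∀ b ∈ A j, H.Adj a b}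

instance (r : ℕ) (H : SimpleGraph V) : PartialOrder (HomK r H) where
  le A B := ∀ i, A.1 i ⊆ B.1 i
  le_refl A i := subset_rfl
  le_trans A B C h h' i := (h i).trans (h' i)
  le_antisymm A B h h' := Subtype.ext (funext fun i => subset_antisymm (h i) (h' i))

/-- Cyclic shift by `i` on `Hom_p(K_r, H)`: the action of `ω^i ∈ Z_r`. -/
def HomK.shift {r : ℕ} [NeZero r] {H : SimpleGraph V} (i : Fin r) (A : HomK r H) :
    HomK r H :=
  ⟨fun j => A.1 (j + i), fun j => A.2.1 (j + i), by
    intro j k hjk a ha b hb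
    exact A.2.2 (j + i) (k + i) (fun h => hjk (by simpa using add_right_cancel h)) a ha b hb⟩

/-- The compatibility graph of the `Z_r`-poset `Hom_p(K_r, H)` (cyclic shift action):
`A ~ B` iff `A ≠ B` and `A` is comparable with some nontrivial cyclic shift of `B`. -/
def compatK (r : ℕ) [NeZero r] (H : SimpleGraph V) : SimpleGraph (HomK r H) where
  Adj A B := A ≠ B ∧ ∃ i : Fin r, i ≠ 0 ∧ (A ≤ HomK.shift i B ∨ HomK.shift i B ≤ A)
  symm := by
    have hshift : ∀ (i : Fin r) (A B : HomK r H), A ≤ B → HomK.shift i A ≤ HomK.shift i B :=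
      fun i A B h j => h (j + i)
    have hinv : ∀ (i : Fin r) (A : HomK r H), HomK.shift (-i) (HomK.shift i A) = A := by
      intro i A
      apply Subtype.ext
      funext j
      show A.1 (j + -i + i) = A.1 j
      simp
    constructor
    rintro A B ⟨hAB, i, hi, h⟩
    refine ⟨hAB.symm, -i, by simpa using hi, ?_⟩
    rcases h with h | h
    · right
      have := hshift (-i) _ _ h
      rwa [hinv] at this
    · left
      have := hshift (-i) _ _ h
      rwa [hinv] at this
  loopless := ⟨fun A h => h.1 rfl⟩

noncomputable instance (r : ℕ) (H : SimpleGraph V) [Fintype V] : Fintype (HomK r H) := by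
  classical exact Subtype.fintype _

/-- For a graph `H` and `r ≥ 2` with `Hom_p(K_r, H)` nonempty, there
is a graph homomorphism from the compatibility graph `C_{Hom_p(K_r, H)}` (for the
cyclic shift `Z_r`-action) to `H`; consequently
`χ(C_{Hom_p(K_r, H)}) ≤ χ(H)`. -/
theorem compatK_hom_to_H
    (H : SimpleGraph V) (r : ℕ) [NeZero r] (hr : 2 ≤ r) (hne : Nonempty (HomK r H)) :
    Nonempty (compatK r H →g H) ∧
      (compatK r H).chromaticNumber ≤ H.chromaticNumber := by
  classical
  have hi0 : ∀ A : HomK r H, ∃ v, v ∈ A.1 0 := fun A => A.2.1 0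
  set f : HomK r H → V := fun A => (hi0 A).choose with hf
  have hmem : ∀ A : HomK r H, f A ∈ A.1 0 := fun A => (hi0 A).choose_spec
  have hhom : ∀ {A B : HomK r H}, (compatK r H).Adj A B → H.Adj (f A) (f B) := by
    rintro A B ⟨-, i, hi, h | h⟩
    · -- A ≤ shift i B : f A ∈ B.1 i, f B ∈ B.1 0
      have ha : f A ∈ B.1 i := by
        have : f A ∈ B.1 (0 + i) := h 0 (hmem A)
        rwa [zero_add] at this
      exact (B.2.2 0 i (Ne.symm hi) _ (hmem B) _ ha).symm
    · -- shift i B ≤ A : f B ∈ B.1 0 = B.1 (-i + i) ⊆ A.1 (-i)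
      have hb : f B ∈ A.1 (-i) := by
        apply h (-i)
        show f B ∈ B.1 (-i + i)
        simpa using hmem B
      exact A.2.2 0 (-i) (fun hc => hi (by simpa using hc.symm)) _ (hmem A) _ hb
  refine ⟨⟨⟨f, hhom⟩⟩, ?_⟩
  apply SimpleGraph.chromaticNumber_le_of_forall_imp
  intro n ⟨C⟩
  exact ⟨C.comp ⟨f, hhom⟩⟩
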